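/- Let m ≥ 1 be an integer and let Λ_m be the 4×4 real matrix Λ_m = (π/2)·[[0, −m√3, 0, 0], [m√3, 0, −2m, 0], [0, 2m, 0, −m√3], [0, 0, m√3, 0]]. Then for all t ∈ ℝ, the first column of the matrix exponential exp(tΛ_m) equals ( (1/4)cos(3πmt/2) + (3/4)cos(πmt/2), (√3/4)sin(3πmt/2) + (√3/4)sin(πmt/2), (√3/4)cos(πmt/2) − (√3/4)cos(3πmt/2), (3/4)sin(πmt/2) − (1/4)sin(3πmt/2) ). -/

import Mathlib

open Real

/-- The constant logarithmic derivative
`Λ_m = (π/2)·[[0, −m√3, 0, 0], [m√3, 0, −2m, 0], [0, 2m, 0, −m√3], [0, 0, m√3, 0]]`. -/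
noncomputable def LamM (m : ℕ) : Matrix (Fin 4) (Fin 4) ℝ :=
  (π / 2) • !![0, -((m : ℝ) * Real.sqrt 3), 0, 0;
               (m : ℝ) * Real.sqrt 3, 0, -(2 * (m : ℝ)), 0;
               0, 2 * (m : ℝ), 0, -((m : ℝ) * Real.sqrt 3);
               0, 0, (m : ℝ) * Real.sqrt 3, 0]

/-- The normalized matrix `N` with `t • Λ_m = (πmt/2) • N`. -/
noncomputable def Nmat : Matrix (Fin 4) (Fin 4) ℝ :=
  !![0, -Real.sqrt 3, 0, 0;
     Real.sqrt 3, 0, -2, 0;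
     0, 2, 0, -Real.sqrt 3;
     0, 0, Real.sqrt 3, 0]

/-- Candidate for `exp (θ • N)`. -/
noncomputable def Gmat (θ : ℝ) : Matrix (Fin 4) (Fin 4) ℝ :=
  ((9 * Real.cos θ - Real.cos (3 * θ)) / 8) • (1 : Matrix (Fin 4) (Fin 4) ℝ)
    + ((27 * Real.sin θ - Real.sin (3 * θ)) / 24) • Nmat
    + ((Real.cos θ - Real.cos (3 * θ)) / 8) • Nmat ^ 2
    + ((3 * Real.sin θ - Real.sin (3 * θ)) / 24) • Nmat ^ 3

lemma sqrt3_sq : Real.sqrt 3 * Real.sqrt 3 = 3 := Real.mul_self_sqrt (by norm_num)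

lemma Nmat_sq : Nmat ^ 2 =
    !![-3, 0, 2 * Real.sqrt 3, 0;
       0, -7, 0, 2 * Real.sqrt 3;
       2 * Real.sqrt 3, 0, -7, 0;
       0, 2 * Real.sqrt 3, 0, -3] := by
  have hs := sqrt3_sq
  rw [sq]
  ext i j
  fin_cases i <;> fin_cases j <;>
    simp [Nmat, Matrix.mul_apply, Fin.sum_univ_four, Matrix.cons_val_zero, Matrix.cons_val_one,
      Matrix.head_cons, Matrix.head_fin_const, Matrix.cons_val', Matrix.empty_val',
      Matrix.cons_val_fin_one, Matrix.vecHead, Matrix.vecTail] <;> nlinarith [hs]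

lemma Nmat_cube : Nmat ^ 3 =
    !![0, 7 * Real.sqrt 3, 0, -6;
       -(7 * Real.sqrt 3), 0, 20, 0;
       0, -20, 0, 7 * Real.sqrt 3;
       6, 0, -(7 * Real.sqrt 3), 0] := by
  have hs := sqrt3_sq
  rw [pow_succ, Nmat_sq]
  ext i j
  fin_cases i <;> fin_cases j <;>
    simp [Nmat, Matrix.mul_apply, Fin.sum_univ_four, Matrix.cons_val_zero, Matrix.cons_val_one,
      Matrix.head_cons, Matrix.head_fin_const, Matrix.cons_val', Matrix.empty_val',
      Matrix.cons_val_fin_one, Matrix.vecHead, Matrix.vecTail] <;> nlinarith [hs]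

lemma Nmat_pow4 : Nmat ^ 4 = (-10 : ℝ) • Nmat ^ 2 - (9 : ℝ) • 1 := by
  have hs := sqrt3_sq
  have h4 : Nmat ^ 4 = Nmat ^ 3 * Nmat := by rw [pow_succ]
  rw [h4, Nmat_cube, Nmat_sq]
  ext i j
  fin_cases i <;> fin_cases j <;>
    simp [Nmat, Matrix.mul_apply, Fin.sum_univ_four, Matrix.one_apply, Matrix.cons_val_zero, Matrix.cons_val_one,
      Matrix.head_cons, Matrix.head_fin_const, Matrix.cons_val', Matrix.empty_val',
      Matrix.cons_val_fin_one, Matrix.vecHead, Matrix.vecTail] <;> nlinarith [hs]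

lemma Gmat_zero : Gmat 0 = 1 := by
  simp [Gmat]
  norm_num

lemma exp_Nmat (θ : ℝ) : NormedSpace.exp (θ • Nmat) = Gmat θ := by
  letI : SeminormedRing (Matrix (Fin 4) (Fin 4) ℝ) := Matrix.linftyOpSemiNormedRing
  letI : NormedRing (Matrix (Fin 4) (Fin 4) ℝ) := Matrix.linftyOpNormedRing
  letI : NormedAlgebra ℝ (Matrix (Fin 4) (Fin 4) ℝ) := Matrix.linftyOpNormedAlgebra
  have Gderiv : ∀ u : ℝ, HasDerivAt Gmat (Nmat * Gmat u) u := by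
    intro u
    have h3 : HasDerivAt (fun v : ℝ => 3 * v) 3 u := by
      simpa using (hasDerivAt_id u).const_mul 3
    have hc3 : HasDerivAt (fun v : ℝ => Real.cos (3 * v)) (-Real.sin (3 * u) * 3) u :=
      (Real.hasDerivAt_cos (3 * u)).comp u h3
    have hs3 : HasDerivAt (fun v : ℝ => Real.sin (3 * v)) (Real.cos (3 * u) * 3) u :=
      (Real.hasDerivAt_sin (3 * u)).comp u h3
    have d1 : HasDerivAt (fun v : ℝ => (9 * Real.cos v - Real.cos (3 * v)) / 8)
        ((9 * -Real.sin u - -Real.sin (3 * u) * 3) / 8) u :=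
      (((Real.hasDerivAt_cos u).const_mul 9).sub hc3).div_const 8
    have d2 : HasDerivAt (fun v : ℝ => (27 * Real.sin v - Real.sin (3 * v)) / 24)
        ((27 * Real.cos u - Real.cos (3 * u) * 3) / 24) u :=
      (((Real.hasDerivAt_sin u).const_mul 27).sub hs3).div_const 24
    have d3 : HasDerivAt (fun v : ℝ => (Real.cos v - Real.cos (3 * v)) / 8)
        ((-Real.sin u - -Real.sin (3 * u) * 3) / 8) u :=
      ((Real.hasDerivAt_cos u).sub hc3).div_const 8
    have d4 : HasDerivAt (fun v : ℝ => (3 * Real.sin v - Real.sin (3 * v)) / 24)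
        ((3 * Real.cos u - Real.cos (3 * u) * 3) / 24) u :=
      (((Real.hasDerivAt_sin u).const_mul 3).sub hs3).div_const 24
    have hD := ((((d1.smul_const (1 : Matrix (Fin 4) (Fin 4) ℝ)).add
        (d2.smul_const Nmat)).add (d3.smul_const (Nmat ^ 2))).add
        (d4.smul_const (Nmat ^ 3)))
    refine hD.congr_deriv ?_
    symm
    simp only [Gmat, mul_add, mul_smul_comm, mul_one, ← pow_two, ← pow_succ']
    rw [Nmat_pow4]
    module
  have key : ∀ u : ℝ,
      HasDerivAt (fun v : ℝ => NormedSpace.exp ((-v) • Nmat) * Gmat v)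
        (0 : Matrix (Fin 4) (Fin 4) ℝ) u := by
    intro u
    have hE : HasDerivAt (fun v : ℝ => NormedSpace.exp (v • Nmat))
        (NormedSpace.exp ((-u) • Nmat) * Nmat) (-u) :=
      hasDerivAt_exp_smul_const Nmat (-u)
    have hneg : HasDerivAt (fun v : ℝ => -v) (-1 : ℝ) u := (hasDerivAt_id u).neg
    have hE2 : HasDerivAt (fun v : ℝ => NormedSpace.exp ((-v) • Nmat))
        ((-1 : ℝ) • (NormedSpace.exp ((-u) • Nmat) * Nmat)) u := by
      exact HasDerivAt.scomp u hE hneg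
    have := hE2.mul (Gderiv u)
    refine this.congr_deriv ?_
    simp [neg_one_smul, mul_assoc]
  have hconst : ∀ u : ℝ, NormedSpace.exp ((-u) • Nmat) * Gmat u = 1 := by
    intro u
    have hc := is_const_of_deriv_eq_zero
      (f := fun v : ℝ => NormedSpace.exp ((-v) • Nmat) * Gmat v)
      (fun v => (key v).differentiableAt) (fun v => (key v).deriv) u 0
    simpa [Gmat_zero, NormedSpace.exp_zero] using hc
  have hmul : NormedSpace.exp (θ • Nmat) * NormedSpace.exp ((-θ) • Nmat) = 1 := by
    have h2 := Matrix.exp_add_of_commute (θ • Nmat) ((-θ) • Nmat)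
      (((Commute.refl Nmat).smul_left θ).smul_right (-θ))
    have h0 : θ • Nmat + (-θ) • Nmat = 0 := by rw [← add_smul]; simp
    rw [h0, NormedSpace.exp_zero] at h2
    exact h2.symm
  have h := congrArg (fun M => NormedSpace.exp (θ • Nmat) * M) (hconst θ)
  simp only [← mul_assoc, hmul, one_mul, mul_one] at h
  exact h.symm

/-- For every `m ≥ 1` and `t ∈ ℝ`, the first column of the matrix
exponential `exp(tΛ_m)` is the curve `γ₁^m(t)` given by the explicit trigonometric
formula below. -/
theorem stmt_13 (m : ℕ) (hm : 1 ≤ m) :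
    ∀ t : ℝ,
      (fun i : Fin 4 => NormedSpace.exp (t • LamM m) i 0)
        = ![1 / 4 * Real.cos (3 * π * (m : ℝ) * t / 2) + 3 / 4 * Real.cos (π * (m : ℝ) * t / 2),
            Real.sqrt 3 / 4 * Real.sin (3 * π * (m : ℝ) * t / 2)
              + Real.sqrt 3 / 4 * Real.sin (π * (m : ℝ) * t / 2),
            Real.sqrt 3 / 4 * Real.cos (π * (m : ℝ) * t / 2)
              - Real.sqrt 3 / 4 * Real.cos (3 * π * (m : ℝ) * t / 2),
            3 / 4 * Real.sin (π * (m : ℝ) * t / 2)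
              - 1 / 4 * Real.sin (3 * π * (m : ℝ) * t / 2)] := by
  intro t
  have h1 : t • LamM m = (π * (m : ℝ) * t / 2) • Nmat := by
    ext i j
    fin_cases i <;> fin_cases j <;>
      simp [LamM, Nmat, Matrix.smul_apply, Matrix.cons_val_zero, Matrix.cons_val_one,
      Matrix.head_cons, Matrix.head_fin_const, Matrix.cons_val', Matrix.empty_val',
      Matrix.cons_val_fin_one, Matrix.vecHead, Matrix.vecTail] <;> ring
  funext i
  rw [h1, exp_Nmat]
  have harg3 : 3 * π * (m : ℝ) * t / 2 = 3 * (π * (m : ℝ) * t / 2) := by ring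
  fin_cases i <;>
    (rw [Gmat, Nmat_sq, Nmat_cube]
     simp [Nmat, Matrix.add_apply, Matrix.smul_apply,
      Matrix.one_apply, harg3, Matrix.cons_val_zero, Matrix.cons_val_one,
      Matrix.head_cons, Matrix.head_fin_const, Matrix.cons_val', Matrix.empty_val',
      Matrix.cons_val_fin_one, Matrix.vecHead, Matrix.vecTail]) <;> ring
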